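/- Let n and U be finite types. On the set M of pairs (W, p), where W : Matrix n n ℝ is a real matrix with zero diagonal (∀ i, W i i = 0, the matrix of dependency terms of a linear SCM) and p is a probability mass function on U, define d((W₁,p₁),(W₂,p₂)) = Σ_{i≠j} |W₁ i j − W₂ i j| + √(JSD(p₁,p₂)). Then d is a metric on M: it is nonnegative, d((W₁,p₁),(W₂,p₂)) = 0 holds if and only if W₁ = W₂ and p₁ = p₂, it is symmetric, and it satisfies the triangle inequality. -/

import Mathlib

open Finset

/-- A probability mass function on a finite type: nonnegative and summing to 1. -/
def IsPMF {U : Type*} [Fintype U] (p : U → ℝ) : Prop :=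
  (∀ i, 0 ≤ p i) ∧ ∑ i, p i = 1

/-- Kullback–Leibler divergence (with the convention `0 * log (0 / x) = 0`,
which holds automatically in `ℝ`). -/
noncomputable def KL {U : Type*} [Fintype U] (p q : U → ℝ) : ℝ :=
  ∑ i, p i * Real.log (p i / q i)

/-- Jensen–Shannon divergence. -/
noncomputable def JSD {U : Type*} [Fintype U] (p q : U → ℝ) : ℝ :=
  (1 / 2) * KL p (fun i => (p i + q i) / 2) + (1 / 2) * KL q (fun i => (p i + q i) / 2)

/-- A matrix has zero diagonal. -/
def ZeroDiag {n : Type*} (W : Matrix n n ℝ) : Prop := ∀ i, W i i = 0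

/-- The distance between two linear SCMs `(W, p)`:
sum of absolute differences of off-diagonal dependency terms
plus the square root of the Jensen–Shannon divergence. -/
noncomputable def scmDist {n U : Type*} [Fintype n] [Fintype U] [DecidableEq n]
    (M₁ M₂ : Matrix n n ℝ × (U → ℝ)) : ℝ :=
  (∑ ij ∈ Finset.univ.filter (fun ij : n × n => ij.1 ≠ ij.2),
      |M₁.1 ij.1 ij.2 - M₂.1 ij.1 ij.2|) + Real.sqrt (JSD M₁.2 M₂.2)

open Real

/- ### Auxiliary pointwise theory: `Dfun a b = φ a + φ b - 2 φ ((a+b)/2)` with `φ x = x log x` -/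

noncomputable def Dfun (a b : ℝ) : ℝ :=
  a * Real.log a + b * Real.log b - (a + b) * Real.log ((a + b) / 2)

lemma Dfun_self (a : ℝ) : Dfun a a = 0 := by
  simp [Dfun]; ring

lemma Dfun_comm (a b : ℝ) : Dfun a b = Dfun b a := by
  unfold Dfun; rw [add_comm b a]; ring

lemma Dfun_nonneg {a b : ℝ} (ha : 0 ≤ a) (hb : 0 ≤ b) : 0 ≤ Dfun a b := by
  have h := Real.convexOn_mul_log.2 (Set.mem_Ici.2 ha) (Set.mem_Ici.2 hb)
      (by norm_num : (0:ℝ) ≤ 1/2) (by norm_num : (0:ℝ) ≤ 1/2) (by norm_num)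
  simp only [smul_eq_mul] at h
  rw [show (1/2 : ℝ) * a + 1/2 * b = (a+b)/2 by ring] at h
  simp only [Dfun]
  nlinarith [h]

lemma Dfun_eq_zero {a b : ℝ} (ha : 0 ≤ a) (hb : 0 ≤ b) (h : Dfun a b = 0) : a = b := by
  by_contra hne
  have h2 := Real.strictConvexOn_mul_log.2 (Set.mem_Ici.2 ha) (Set.mem_Ici.2 hb) hne
      (by norm_num : (0:ℝ) < 1/2) (by norm_num : (0:ℝ) < 1/2) (by norm_num)
  simp only [smul_eq_mul] at h2
  rw [show (1/2 : ℝ) * a + 1/2 * b = (a+b)/2 by ring] at h2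
  simp only [Dfun] at h
  nlinarith [h2]

lemma Dfun_pos {a b : ℝ} (ha : 0 ≤ a) (hb : 0 ≤ b) (hne : a ≠ b) : 0 < Dfun a b :=
  (Dfun_nonneg ha hb).lt_of_ne fun h => hne (Dfun_eq_zero ha hb h.symm)

lemma Dfun_funext (a : ℝ) : (fun t => Dfun a t)
    = fun t => a * log a + t * log t - 2 * (((a + t) / 2) * log ((a + t) / 2)) := by
  funext t; unfold Dfun; ring

lemma continuous_Dfun_right (a : ℝ) : Continuous fun t => Dfun a t := by
  rw [Dfun_funext]
  have h2 : Continuous fun t : ℝ => ((a + t) / 2) * log ((a + t) / 2) :=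
    Real.continuous_mul_log.comp (by continuity)
  exact (continuous_const.add Real.continuous_mul_log).sub (continuous_const.mul h2)

lemma hasDerivAt_Dfun_right (a : ℝ) {t : ℝ} (ht : t ≠ 0) (hat : a + t ≠ 0) :
    HasDerivAt (fun t => Dfun a t) (log t - log ((a + t) / 2)) t := by
  rw [Dfun_funext]
  have h0 : HasDerivAt (fun t : ℝ => (a + t) / 2) (1 / 2) t := by
    simpa using ((hasDerivAt_id t).const_add a).div_const 2
  have h2 : HasDerivAt (fun t : ℝ => ((a + t) / 2) * log ((a + t) / 2))
      ((log ((a + t) / 2) + 1) * (1 / 2)) t := by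
    have := (Real.hasDerivAt_mul_log (div_ne_zero hat two_ne_zero)).comp t h0; exact this
  have h := ((Real.hasDerivAt_mul_log ht).const_add (a * log a)).sub (h2.const_mul 2)
  exact h.congr_deriv (by ring)

lemma Dfun_mono_right {a b b' : ℝ} (ha : 0 ≤ a) (hab : a ≤ b) (hbb : b ≤ b') :
    Dfun a b ≤ Dfun a b' := by
  have hmono : MonotoneOn (fun t => Dfun a t) (Set.Ici a) := by
    apply monotoneOn_of_deriv_nonneg (convex_Ici a) (continuous_Dfun_right a).continuousOn
    · intro t ht
      rw [interior_Ici] at ht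
      have ht' : 0 < t := lt_of_le_of_lt ha ht
      exact ((hasDerivAt_Dfun_right a ht'.ne' (by positivity)).differentiableAt).differentiableWithinAt
    · intro t ht
      rw [interior_Ici] at ht
      have ht' : 0 < t := lt_of_le_of_lt ha ht
      rw [(hasDerivAt_Dfun_right a ht'.ne' (by positivity)).deriv]
      have h1 : (a + t) / 2 ≤ t := by linarith [le_of_lt (Set.mem_Ioi.1 ht)]
      have hpos : 0 < (a + t) / 2 := by positivity
      linarith [Real.log_le_log hpos h1]
  exact hmono (Set.mem_Ici.2 hab) (Set.mem_Ici.2 (hab.trans hbb)) hbb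

lemma Dfun_anti_left {x x' c : ℝ} (hx : 0 ≤ x) (hxx : x ≤ x') (hxc : x' ≤ c) :
    Dfun x' c ≤ Dfun x c := by
  have hswap : (fun x => Dfun x c) = fun x => Dfun c x := by
    funext y; exact Dfun_comm y c
  have hanti : AntitoneOn (fun x => Dfun x c) (Set.Icc 0 c) := by
    apply antitoneOn_of_deriv_nonpos (convex_Icc 0 c)
      (by rw [hswap]; exact (continuous_Dfun_right c).continuousOn)
    · intro t ht
      rw [interior_Icc] at ht
      rw [hswap]
      exact ((hasDerivAt_Dfun_right c ht.1.ne' (by nlinarith [ht.1, ht.2])).differentiableAt).differentiableWithinAt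
    · intro t ht
      rw [interior_Icc] at ht
      rw [hswap, (hasDerivAt_Dfun_right c ht.1.ne' (by nlinarith [ht.1, ht.2])).deriv]
      have h1 : t ≤ (c + t) / 2 := by linarith [ht.2.le]
      linarith [Real.log_le_log ht.1 h1]
  exact hanti (Set.mem_Icc.2 ⟨hx, hxx.trans hxc⟩) (Set.mem_Icc.2 ⟨hx.trans hxx, hxc⟩) hxx

lemma g_nonneg {u : ℝ} (h0 : 0 ≤ u) (h2 : u ≤ 2) :
    0 ≤ u * log u + (2 - u) * log (2 - u) := by
  have h := Dfun_nonneg (a := u) (b := 2 - u) h0 (by linarith)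
  unfold Dfun at h
  rw [show u + (2 - u) = 2 by ring] at h
  norm_num [Real.log_one] at h
  linarith

lemma key_ineq {u : ℝ} (h1 : 1 ≤ u) (h2 : u < 2) :
    u * log u + (2 - u) * log (2 - u) ≤ -(log u * log (2 - u)) := by
  set F := fun u : ℝ => -(log u * log (2 - u)) - (u * log u + (2 - u) * log (2 - u)) with hF
  have hderiv : ∀ v ∈ Set.Ioo (1:ℝ) 2, HasDerivAt F
      (-(v⁻¹ * log (2 - v) + log v * -(2 - v)⁻¹) - (log v + 1 + (log (2 - v) + 1) * (-1))) v := by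
    intro v hv
    have hv0 : v ≠ 0 := by have := hv.1; intro h; rw [h] at this; linarith
    have hv2 : (2 : ℝ) - v ≠ 0 := by have := hv.2; intro h; linarith
    have dinner : HasDerivAt (fun u : ℝ => 2 - u) (-1) v := by
      simpa using (hasDerivAt_id v).const_sub 2
    have d2 : HasDerivAt (fun u : ℝ => log (2 - u)) (-(2 - v)⁻¹) v := by
      have := (Real.hasDerivAt_log hv2).comp v dinner
      exact this.congr_deriv (by ring)
    have d3 := (Real.hasDerivAt_log hv0).mul d2
    have d4 : HasDerivAt (fun u : ℝ => u * log u) (log v + 1) v := Real.hasDerivAt_mul_log hv0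
    have d5 : HasDerivAt (fun u : ℝ => (2 - u) * log (2 - u)) ((log (2 - v) + 1) * (-1)) v := by
      have := (Real.hasDerivAt_mul_log hv2).comp v dinner
      exact this
    exact (d3.neg).sub (d4.add d5)
  have hmono : MonotoneOn F (Set.Ico 1 2) := by
    apply monotoneOn_of_deriv_nonneg (convex_Ico 1 2)
    · intro v hv
      have hv0 : v ≠ 0 := by have := hv.1; intro h; rw [h] at this; linarith
      have hv2 : (2 : ℝ) - v ≠ 0 := by have := hv.2; intro h; linarith
      have c1 : ContinuousAt F v := by
        have cl : ContinuousAt (fun u : ℝ => log u) v := Real.continuousAt_log hv0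
        have cl2 : ContinuousAt (fun u : ℝ => log (2 - u)) v :=
          (Real.continuousAt_log hv2).comp (by fun_prop)
        fun_prop (disch := assumption)
      exact c1.continuousWithinAt
    · intro v hv
      rw [interior_Ico] at hv
      exact ((hderiv v hv).differentiableAt).differentiableWithinAt
    · intro v hv
      rw [interior_Ico] at hv
      rw [(hderiv v hv).deriv]
      have hv1 : (1:ℝ) < v := hv.1
      have hv2 : v < 2 := hv.2
      have hvpos : (0:ℝ) < v := by linarith
      have h2v : (0:ℝ) < 2 - v := by linarith
      have hg := g_nonneg (by linarith : (0:ℝ) ≤ v) (by linarith : v ≤ 2)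
      have heq : -(v⁻¹ * log (2 - v) + log v * -(2 - v)⁻¹) - (log v + 1 + (log (2 - v) + 1) * (-1))
          = (v - 1) / (v * (2 - v)) * (v * log v + (2 - v) * log (2 - v)) := by
        field_simp
        ring
      rw [heq]
      exact mul_nonneg (div_nonneg (by linarith) (by positivity)) hg
  have hF1 : F 1 = 0 := by norm_num [hF]
  have := hmono (Set.mem_Ico.2 ⟨le_refl 1, by norm_num⟩) (Set.mem_Ico.2 ⟨h1, h2⟩) h1
  rw [hF1] at this
  simp only [hF] at this
  linarith
lemma G_mono {t : ℝ} (ht : 0 < t) {a b : ℝ} (ha : 0 ≤ a) (hab : a ≤ b) (hbt : b < t) :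
    (log t - log ((a + t) / 2)) * Real.sqrt (Dfun b t) ≤
    (log t - log ((b + t) / 2)) * Real.sqrt (Dfun a t) := by
  have hswapfun : (fun y : ℝ => Dfun y t) = fun y => Dfun t y := by
    funext y; exact Dfun_comm y t
  set G := fun x : ℝ => (log t - log ((x + t) / 2)) / Real.sqrt (Dfun x t) with hG
  have hDpos : ∀ x ∈ Set.Icc 0 b, 0 < Dfun x t := fun x hx =>
    Dfun_pos hx.1 ht.le (ne_of_lt (lt_of_le_of_lt hx.2 hbt))
  have hmono : MonotoneOn G (Set.Icc 0 b) := by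
    apply monotoneOn_of_deriv_nonneg (convex_Icc 0 b)
    · -- continuity
      apply ContinuousOn.div
      · apply ContinuousOn.sub continuousOn_const
        intro x hx
        apply ContinuousAt.continuousWithinAt
        exact ContinuousAt.log
          (by fun_prop : ContinuousAt (fun y : ℝ => (y + t) / 2) x)
          (by nlinarith [hx.1])
      · apply Continuous.continuousOn
        have hsw2 : (fun x : ℝ => Real.sqrt (Dfun x t)) = fun x => Real.sqrt (Dfun t x) := by
          funext y; rw [Dfun_comm]
        rw [hsw2]
        exact Real.continuous_sqrt.comp (continuous_Dfun_right t)
      · intro x hx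
        exact ne_of_gt (Real.sqrt_pos.2 (hDpos x hx))
    all_goals intro x hx; rw [interior_Icc] at hx
    case _ =>
      -- differentiability (will follow from explicit derivative below; we redo it)
      have hx0 : (0:ℝ) < x := hx.1
      have hxb : x < b := hx.2
      have hxt : x < t := lt_trans hxb hbt
      have hD : HasDerivAt (fun y : ℝ => Dfun y t) (log x - log ((t + x) / 2)) x := by
        rw [hswapfun]; exact hasDerivAt_Dfun_right t hx0.ne' (by positivity)
      have hq := hD.sqrt (ne_of_gt (hDpos x ⟨hx0.le, hxb.le⟩))
      have h0 : HasDerivAt (fun y : ℝ => (y + t) / 2) (1 / 2) x := by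
        simpa using ((hasDerivAt_id x).add_const t).div_const 2
      have hlog : HasDerivAt (fun y : ℝ => log ((y + t) / 2)) (((x + t) / 2)⁻¹ * (1 / 2)) x :=
        (Real.hasDerivAt_log (by positivity)).comp x h0
      have hnum := hlog.const_sub (log t)
      exact ((hnum.div hq (ne_of_gt (Real.sqrt_pos.2 (hDpos x ⟨hx0.le, hxb.le⟩)))).differentiableAt).differentiableWithinAt
    case _ =>
      have hx0 : (0:ℝ) < x := hx.1
      have hxb : x < b := hx.2
      have hxt : x < t := lt_trans hxb hbt
      set m := (x + t) / 2 with hm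
      have hm0 : (0:ℝ) < m := by positivity
      have hxteq : x + t = 2 * m := by rw [hm]; ring
      have hDxt := hDpos x ⟨hx0.le, hxb.le⟩
      set q := Real.sqrt (Dfun x t) with hqdef
      have hq0 : (0:ℝ) < q := Real.sqrt_pos.2 hDxt
      have hqq : q * q = Dfun x t := Real.mul_self_sqrt hDxt.le
      have hD : HasDerivAt (fun y : ℝ => Dfun y t) (log x - log m) x := by
        rw [hswapfun]
        have := hasDerivAt_Dfun_right t hx0.ne' (by positivity : t + x ≠ 0)
        rwa [add_comm t x] at this
      have hq : HasDerivAt (fun y : ℝ => Real.sqrt (Dfun y t)) ((log x - log m) / (2 * q)) x :=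
        hD.sqrt (ne_of_gt hDxt)
      have h0 : HasDerivAt (fun y : ℝ => (y + t) / 2) (1 / 2) x := by
        simpa using ((hasDerivAt_id x).add_const t).div_const 2
      have hlog : HasDerivAt (fun y : ℝ => log ((y + t) / 2)) (m⁻¹ * (1 / 2)) x := by
        have := (Real.hasDerivAt_log hm0.ne').comp x h0; exact this
      have hnum := hlog.const_sub (log t)
      have hGd := hnum.div hq (ne_of_gt hq0)
      rw [show deriv G x = _ from hGd.deriv]
      apply div_nonneg _ (sq_nonneg _)
      -- key inequality
      have hmt : m < t := by rw [hm]; linarith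
      have hu1 : (1:ℝ) ≤ t / m := (one_le_div hm0).2 hmt.le
      have hu2 : t / m < 2 := by rw [div_lt_iff₀ hm0]; linarith
      have ku := key_ineq hu1 hu2
      have h2u : (2:ℝ) - t / m = x / m := by field_simp; linarith
      rw [h2u, Real.log_div ht.ne' hm0.ne', Real.log_div hx0.ne' hm0.ne'] at ku
      have hDeq : m * (t / m * (log t - log m) + x / m * (log x - log m)) = Dfun x t := by
        unfold Dfun
        rw [← hm]
        field_simp
        ring
      have hDle : Dfun x t ≤ -(m * ((log t - log m) * (log x - log m))) := by
        have h := mul_le_mul_of_nonneg_left ku hm0.le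
        rw [hDeq] at h
        nlinarith [h]
      set n := log t - log m with hn
      set D' := log x - log m with hD'
      set N := -(m⁻¹ * (1 / 2)) * q - n * (D' / (2 * q)) with hN
      have e1 : N * (2 * q) = -((q * q) * m⁻¹) - n * (D' / (2 * q) * (2 * q)) := by
        rw [hN]; ring
      rw [hqq, div_mul_cancel₀ _ (by positivity : (2:ℝ) * q ≠ 0)] at e1
      have hfin : (0:ℝ) ≤ -(Dfun x t * m⁻¹) - n * D' := by
        have heq2 : -(Dfun x t * m⁻¹) - n * D' = (-(Dfun x t) - m * (n * D')) / m := by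
          field_simp
        rw [heq2]
        apply div_nonneg _ hm0.le
        linarith [hDle]
      by_contra hNneg
      push_neg at hNneg
      have hcon := mul_neg_of_neg_of_pos hNneg (by positivity : (0:ℝ) < 2 * q)
      rw [e1] at hcon
      linarith [hfin, hcon]
  have hqa : (0:ℝ) < Real.sqrt (Dfun a t) :=
    Real.sqrt_pos.2 (Dfun_pos ha ht.le (ne_of_lt (lt_of_le_of_lt hab hbt)))
  have hqb : (0:ℝ) < Real.sqrt (Dfun b t) :=
    Real.sqrt_pos.2 (Dfun_pos (ha.trans hab) ht.le (ne_of_lt hbt))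
  have hres := hmono ⟨ha, hab⟩ ⟨ha.trans hab, le_refl b⟩ hab
  simp only [hG] at hres
  rw [div_le_div_iff₀ hqa hqb] at hres
  exact hres

lemma sqrt_Dfun_triangle_aux {a b c : ℝ} (ha : 0 ≤ a) (hb : 0 ≤ b) (hc : 0 ≤ c) (hac : a ≤ c) :
    Real.sqrt (Dfun a c) ≤ Real.sqrt (Dfun a b) + Real.sqrt (Dfun b c) := by
  rcases le_total b a with hba | hab
  · -- b ≤ a ≤ c
    have h := Dfun_anti_left hb hba hac
    calc Real.sqrt (Dfun a c) ≤ Real.sqrt (Dfun b c) := Real.sqrt_le_sqrt h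
    _ ≤ Real.sqrt (Dfun a b) + Real.sqrt (Dfun b c) :=
        le_add_of_nonneg_left (Real.sqrt_nonneg _)
  rcases le_total c b with hcb | hbc
  · -- a ≤ c ≤ b
    have h := Dfun_mono_right ha hac hcb
    calc Real.sqrt (Dfun a c) ≤ Real.sqrt (Dfun a b) := Real.sqrt_le_sqrt h
    _ ≤ Real.sqrt (Dfun a b) + Real.sqrt (Dfun b c) :=
        le_add_of_nonneg_right (Real.sqrt_nonneg _)
  -- main case a ≤ b ≤ c
  set Δ := fun t : ℝ => Real.sqrt (Dfun a t) - Real.sqrt (Dfun b t) with hΔ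
  have hcontD : ∀ y : ℝ, Continuous fun t => Real.sqrt (Dfun y t) := fun y =>
    Real.continuous_sqrt.comp (continuous_Dfun_right y)
  have hanti : AntitoneOn Δ (Set.Icc b c) := by
    apply antitoneOn_of_deriv_nonpos (convex_Icc b c)
      (((hcontD a).sub (hcontD b)).continuousOn)
    · intro t htm
      rw [interior_Icc] at htm
      have htb : b < t := htm.1
      have ht0 : 0 < t := lt_of_le_of_lt hb htb
      have hDa : 0 < Dfun a t := Dfun_pos ha ht0.le (ne_of_lt (lt_of_le_of_lt hab htb))
      have hDb : 0 < Dfun b t := Dfun_pos hb ht0.le (ne_of_lt htb)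
      have da := (hasDerivAt_Dfun_right a ht0.ne' (by positivity)).sqrt (ne_of_gt hDa)
      have db := (hasDerivAt_Dfun_right b ht0.ne' (by positivity)).sqrt (ne_of_gt hDb)
      exact ((da.sub db).differentiableAt).differentiableWithinAt
    · intro t htm
      rw [interior_Icc] at htm
      have htb : b < t := htm.1
      have ht0 : 0 < t := lt_of_le_of_lt hb htb
      have hDa : 0 < Dfun a t := Dfun_pos ha ht0.le (ne_of_lt (lt_of_le_of_lt hab htb))
      have hDb : 0 < Dfun b t := Dfun_pos hb ht0.le (ne_of_lt htb)
      have da := (hasDerivAt_Dfun_right a ht0.ne' (by positivity)).sqrt (ne_of_gt hDa)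
      have db := (hasDerivAt_Dfun_right b ht0.ne' (by positivity)).sqrt (ne_of_gt hDb)
      rw [(da.sub db).deriv]
      have hqa : 0 < Real.sqrt (Dfun a t) := Real.sqrt_pos.2 hDa
      have hqb : 0 < Real.sqrt (Dfun b t) := Real.sqrt_pos.2 hDb
      have hGm := G_mono ht0 ha hab htb
      rw [sub_nonpos, div_le_div_iff₀ (by positivity) (by positivity)]
      nlinarith [hGm]
  have hres := hanti (Set.mem_Icc.2 ⟨le_refl b, hbc⟩) (Set.mem_Icc.2 ⟨hbc, le_refl c⟩) hbc
  simp only [hΔ] at hres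
  have hbb : Real.sqrt (Dfun b b) = 0 := by rw [Dfun_self, Real.sqrt_zero]
  rw [hbb] at hres
  linarith [hres]

lemma sqrt_Dfun_triangle {a b c : ℝ} (ha : 0 ≤ a) (hb : 0 ≤ b) (hc : 0 ≤ c) :
    Real.sqrt (Dfun a c) ≤ Real.sqrt (Dfun a b) + Real.sqrt (Dfun b c) := by
  rcases le_total a c with hac | hca
  · exact sqrt_Dfun_triangle_aux ha hb hc hac
  · have h := sqrt_Dfun_triangle_aux hc hb ha hca
    rw [Dfun_comm a c, Dfun_comm a b, Dfun_comm b c]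
    linarith [h]

lemma term_eq {x y : ℝ} (hx : 0 ≤ x) (hy : 0 ≤ y) :
    x * Real.log (x / ((x + y) / 2)) + y * Real.log (y / ((x + y) / 2)) = Dfun x y := by
  rcases eq_or_lt_of_le hx with h0 | hx0 <;> rcases eq_or_lt_of_le hy with k0 | hy0
  · simp [← h0, ← k0, Dfun]
  · rw [← h0]
    unfold Dfun
    rw [zero_add]
    have h1 : y / (y / 2) = 2 := by field_simp
    rw [h1, Real.log_div hy0.ne' two_ne_zero]
    simp
    ring
  · rw [← k0]
    unfold Dfun
    rw [add_zero]
    have h1 : x / (x / 2) = 2 := by field_simp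
    rw [h1, Real.log_div hx0.ne' two_ne_zero]
    simp
    ring
  · have hm : (0:ℝ) < (x + y) / 2 := by positivity
    rw [Real.log_div hx0.ne' hm.ne', Real.log_div hy0.ne' hm.ne']
    unfold Dfun
    ring

lemma sqrt_sum_Dfun_triangle {U : Type*} [Fintype U] (p q r : U → ℝ)
    (hp : ∀ i, 0 ≤ p i) (hq : ∀ i, 0 ≤ q i) (hr : ∀ i, 0 ≤ r i) :
    Real.sqrt (∑ i, Dfun (p i) (r i)) ≤
      Real.sqrt (∑ i, Dfun (p i) (q i)) + Real.sqrt (∑ i, Dfun (q i) (r i)) := by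
  set u := fun i => Real.sqrt (Dfun (p i) (q i)) with hu
  set v := fun i => Real.sqrt (Dfun (q i) (r i)) with hv
  have hu2 : ∀ i, u i ^ 2 = Dfun (p i) (q i) := fun i =>
    Real.sq_sqrt (Dfun_nonneg (hp i) (hq i))
  have hv2 : ∀ i, v i ^ 2 = Dfun (q i) (r i) := fun i =>
    Real.sq_sqrt (Dfun_nonneg (hq i) (hr i))
  have h1 : ∑ i, Dfun (p i) (r i) ≤ ∑ i, (u i + v i) ^ 2 := by
    apply Finset.sum_le_sum
    intro i _
    have ht := sqrt_Dfun_triangle (hp i) (hq i) (hr i)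
    have hs := Real.sq_sqrt (Dfun_nonneg (hp i) (hr i))
    calc Dfun (p i) (r i) = Real.sqrt (Dfun (p i) (r i)) ^ 2 := hs.symm
    _ ≤ (u i + v i) ^ 2 := pow_le_pow_left₀ (Real.sqrt_nonneg _) ht 2
  have huv : ∑ i, u i * v i ≤ Real.sqrt (∑ i, u i ^ 2) * Real.sqrt (∑ i, v i ^ 2) := by
    have h2 := Finset.sum_mul_sq_le_sq_mul_sq Finset.univ u v
    have hx : (0:ℝ) ≤ ∑ i, u i * v i :=
      Finset.sum_nonneg fun i _ => mul_nonneg (Real.sqrt_nonneg _) (Real.sqrt_nonneg _)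
    calc ∑ i, u i * v i = Real.sqrt ((∑ i, u i * v i) ^ 2) := (Real.sqrt_sq hx).symm
    _ ≤ Real.sqrt ((∑ i, u i ^ 2) * ∑ i, v i ^ 2) := Real.sqrt_le_sqrt h2
    _ = Real.sqrt (∑ i, u i ^ 2) * Real.sqrt (∑ i, v i ^ 2) :=
        Real.sqrt_mul (Finset.sum_nonneg fun i _ => sq_nonneg _) _
  have h3 : ∑ i, (u i + v i) ^ 2
      ≤ (Real.sqrt (∑ i, u i ^ 2) + Real.sqrt (∑ i, v i ^ 2)) ^ 2 := by
    have hexp : ∑ i, (u i + v i) ^ 2 = ∑ i, u i ^ 2 + 2 * (∑ i, u i * v i) + ∑ i, v i ^ 2 := by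
      rw [Finset.mul_sum, ← Finset.sum_add_distrib, ← Finset.sum_add_distrib]
      exact Finset.sum_congr rfl fun i _ => by ring
    rw [hexp]
    have e1 : Real.sqrt (∑ i, u i ^ 2) ^ 2 = ∑ i, u i ^ 2 :=
      Real.sq_sqrt (Finset.sum_nonneg fun i _ => sq_nonneg _)
    have e2 : Real.sqrt (∑ i, v i ^ 2) ^ 2 = ∑ i, v i ^ 2 :=
      Real.sq_sqrt (Finset.sum_nonneg fun i _ => sq_nonneg _)
    nlinarith [huv]
  have h4 : Real.sqrt (∑ i, Dfun (p i) (r i))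
      ≤ Real.sqrt ((Real.sqrt (∑ i, u i ^ 2) + Real.sqrt (∑ i, v i ^ 2)) ^ 2) :=
    Real.sqrt_le_sqrt (h1.trans h3)
  rw [Real.sqrt_sq (add_nonneg (Real.sqrt_nonneg _) (Real.sqrt_nonneg _))] at h4
  have e1 : ∑ i, u i ^ 2 = ∑ i, Dfun (p i) (q i) := Finset.sum_congr rfl fun i _ => hu2 i
  have e2 : ∑ i, v i ^ 2 = ∑ i, Dfun (q i) (r i) := Finset.sum_congr rfl fun i _ => hv2 i
  rw [e1, e2] at h4
  exact h4

/- ### JSD-level lemmas -/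

lemma JSD_eq_sum {U : Type*} [Fintype U] (p q : U → ℝ)
    (hp : ∀ i, 0 ≤ p i) (hq : ∀ i, 0 ≤ q i) :
    JSD p q = (1 / 2) * ∑ i, Dfun (p i) (q i) := by
  unfold JSD KL
  rw [Finset.mul_sum, Finset.mul_sum, ← Finset.sum_add_distrib, Finset.mul_sum]
  apply Finset.sum_congr rfl
  intro i _
  rw [← term_eq (hp i) (hq i)]
  ring

lemma JSD_nonneg {U : Type*} [Fintype U] (p q : U → ℝ)
    (hp : ∀ i, 0 ≤ p i) (hq : ∀ i, 0 ≤ q i) : 0 ≤ JSD p q := by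
  rw [JSD_eq_sum p q hp hq]
  exact mul_nonneg (by norm_num)
    (Finset.sum_nonneg fun i _ => Dfun_nonneg (hp i) (hq i))

lemma JSD_self {U : Type*} [Fintype U] (p : U → ℝ) (hp : ∀ i, 0 ≤ p i) : JSD p p = 0 := by
  rw [JSD_eq_sum p p hp hp]
  simp [Dfun_self]

lemma JSD_comm {U : Type*} [Fintype U] (p q : U → ℝ)
    (hp : ∀ i, 0 ≤ p i) (hq : ∀ i, 0 ≤ q i) : JSD p q = JSD q p := by
  rw [JSD_eq_sum p q hp hq, JSD_eq_sum q p hq hp]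
  congr 1
  exact Finset.sum_congr rfl fun i _ => Dfun_comm _ _

lemma JSD_eq_zero {U : Type*} [Fintype U] {p q : U → ℝ}
    (hp : ∀ i, 0 ≤ p i) (hq : ∀ i, 0 ≤ q i) (h : JSD p q = 0) : p = q := by
  rw [JSD_eq_sum p q hp hq] at h
  have hsum : ∑ i, Dfun (p i) (q i) = 0 := by linarith
  have hall := (Finset.sum_eq_zero_iff_of_nonneg
    (fun i _ => Dfun_nonneg (hp i) (hq i))).1 hsum
  funext i
  exact Dfun_eq_zero (hp i) (hq i) (hall i (Finset.mem_univ i))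

lemma sqrt_JSD_triangle {U : Type*} [Fintype U] {p q r : U → ℝ}
    (hp : ∀ i, 0 ≤ p i) (hq : ∀ i, 0 ≤ q i) (hr : ∀ i, 0 ≤ r i) :
    Real.sqrt (JSD p r) ≤ Real.sqrt (JSD p q) + Real.sqrt (JSD q r) := by
  rw [JSD_eq_sum p r hp hr, JSD_eq_sum p q hp hq, JSD_eq_sum q r hq hr,
    Real.sqrt_mul (by norm_num : (0:ℝ) ≤ 1 / 2), Real.sqrt_mul (by norm_num : (0:ℝ) ≤ 1 / 2),
    Real.sqrt_mul (by norm_num : (0:ℝ) ≤ 1 / 2), ← mul_add]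
  exact mul_le_mul_of_nonneg_left (sqrt_sum_Dfun_triangle p q r hp hq hr) (Real.sqrt_nonneg _)

theorem scmDist_is_metric {n U : Type*} [Fintype n] [Fintype U] [DecidableEq n]
    (M : Set (Matrix n n ℝ × (U → ℝ)))
    (hM : M = {Wp | ZeroDiag Wp.1 ∧ IsPMF Wp.2}) :
    (∀ M₁ ∈ M, ∀ M₂ ∈ M, 0 ≤ scmDist M₁ M₂) ∧
    (∀ M₁ ∈ M, ∀ M₂ ∈ M, (scmDist M₁ M₂ = 0 ↔ M₁.1 = M₂.1 ∧ M₁.2 = M₂.2)) ∧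
    (∀ M₁ ∈ M, ∀ M₂ ∈ M, scmDist M₁ M₂ = scmDist M₂ M₁) ∧
    (∀ M₁ ∈ M, ∀ M₂ ∈ M, ∀ M₃ ∈ M, scmDist M₁ M₃ ≤ scmDist M₁ M₂ + scmDist M₂ M₃) := by
  subst hM
  refine ⟨?_, ?_, ?_, ?_⟩
  · intro M₁ _ M₂ _
    exact add_nonneg (Finset.sum_nonneg fun _ _ => abs_nonneg _) (Real.sqrt_nonneg _)
  · intro M₁ hM₁ M₂ hM₂
    obtain ⟨hZ₁, hP₁⟩ := hM₁
    obtain ⟨hZ₂, hP₂⟩ := hM₂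
    constructor
    · intro h
      have hA : (0:ℝ) ≤ ∑ ij ∈ Finset.univ.filter (fun ij : n × n => ij.1 ≠ ij.2),
          |M₁.1 ij.1 ij.2 - M₂.1 ij.1 ij.2| := Finset.sum_nonneg fun _ _ => abs_nonneg _
      have hB : (0:ℝ) ≤ Real.sqrt (JSD M₁.2 M₂.2) := Real.sqrt_nonneg _
      have h' : (∑ ij ∈ Finset.univ.filter (fun ij : n × n => ij.1 ≠ ij.2),
          |M₁.1 ij.1 ij.2 - M₂.1 ij.1 ij.2|) + Real.sqrt (JSD M₁.2 M₂.2) = 0 := h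
      have hA0 : (∑ ij ∈ Finset.univ.filter (fun ij : n × n => ij.1 ≠ ij.2),
          |M₁.1 ij.1 ij.2 - M₂.1 ij.1 ij.2|) = 0 := by linarith
      have hB0 : Real.sqrt (JSD M₁.2 M₂.2) = 0 := by linarith
      constructor
      · ext i j
        by_cases hij : i = j
        · subst hij; rw [hZ₁ i, hZ₂ i]
        · have hmem : (i, j) ∈ Finset.univ.filter (fun ij : n × n => ij.1 ≠ ij.2) :=
            Finset.mem_filter.2 ⟨Finset.mem_univ _, hij⟩
          have := (Finset.sum_eq_zero_iff_of_nonneg (fun _ _ => abs_nonneg _)).1 hA0 _ hmem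
          have := abs_eq_zero.1 this
          linarith [this]
      · have hJ0 : JSD M₁.2 M₂.2 = 0 := by
          have hle := Real.sqrt_eq_zero'.1 hB0
          have hge := JSD_nonneg M₁.2 M₂.2 hP₁.1 hP₂.1
          linarith
        exact JSD_eq_zero hP₁.1 hP₂.1 hJ0
    · rintro ⟨h1, h2⟩
      show (∑ ij ∈ Finset.univ.filter (fun ij : n × n => ij.1 ≠ ij.2),
          |M₁.1 ij.1 ij.2 - M₂.1 ij.1 ij.2|) + Real.sqrt (JSD M₁.2 M₂.2) = 0
      rw [h1, h2, JSD_self M₂.2 hP₂.1]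
      simp
  · intro M₁ hM₁ M₂ hM₂
    obtain ⟨hZ₁, hP₁⟩ := hM₁
    obtain ⟨hZ₂, hP₂⟩ := hM₂
    unfold scmDist
    rw [JSD_comm M₁.2 M₂.2 hP₁.1 hP₂.1]
    congr 1
    exact Finset.sum_congr rfl fun ij _ => abs_sub_comm _ _
  · intro M₁ hM₁ M₂ hM₂ M₃ hM₃
    obtain ⟨hZ₁, hP₁⟩ := hM₁
    obtain ⟨hZ₂, hP₂⟩ := hM₂
    obtain ⟨hZ₃, hP₃⟩ := hM₃
    unfold scmDist
    have hA : (∑ ij ∈ Finset.univ.filter (fun ij : n × n => ij.1 ≠ ij.2),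
        |M₁.1 ij.1 ij.2 - M₃.1 ij.1 ij.2|)
        ≤ (∑ ij ∈ Finset.univ.filter (fun ij : n × n => ij.1 ≠ ij.2),
            |M₁.1 ij.1 ij.2 - M₂.1 ij.1 ij.2|)
          + ∑ ij ∈ Finset.univ.filter (fun ij : n × n => ij.1 ≠ ij.2),
            |M₂.1 ij.1 ij.2 - M₃.1 ij.1 ij.2| := by
      rw [← Finset.sum_add_distrib]
      exact Finset.sum_le_sum fun ij _ => abs_sub_le _ _ _
    have hB := sqrt_JSD_triangle hP₁.1 hP₂.1 hP₃.1
    linarith
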